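/- For μ, α, φ > 0 with μα > φ, the probability density f(x) = (φ μ^{φ/α} x^{φ−1} / (S₀^φ ĥ_f^φ Γ(μ))) · Γ((αμ−φ)/α, μx^α/(S₀^α ĥ_f^α)) on x > 0 integrates to 1, i.e., ∫₀^∞ f(x) dx = 1. -/

import Mathlib

open Real MeasureTheory Set

open Filter

noncomputable def incG (a x : ℝ) : ℝ := ∫ t in Ioi x, t ^ (a - 1) * Real.exp (-t)

lemma intOn_g {a : ℝ} (ha : 0 < a) {b : ℝ} (hb : 0 < b) :
    IntegrableOn (fun t : ℝ => t ^ (a - 1) * Real.exp (-b * t)) (Ioi 0) := by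
  have := integrableOn_rpow_mul_exp_neg_mul_rpow (p := 1) (s := a - 1) (b := b)
    (by linarith) one_pos hb
  simpa [Real.rpow_one] using this

lemma intOn_g1 {a : ℝ} (ha : 0 < a) :
    IntegrableOn (fun t : ℝ => t ^ (a - 1) * Real.exp (-t)) (Ioi 0) := by
  have := intOn_g ha (b := 1) one_pos
  simpa using this

lemma intOn_g1' {a : ℝ} (ha : 0 < a) {x : ℝ} (hx : 0 ≤ x) :
    IntegrableOn (fun t : ℝ => t ^ (a - 1) * Real.exp (-t)) (Ioi x) :=
  (intOn_g1 ha).mono_set (Ioi_subset_Ioi hx)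

lemma incG_nonneg (a : ℝ) {x : ℝ} (hx : 0 ≤ x) : 0 ≤ incG a x :=
  setIntegral_nonneg measurableSet_Ioi fun t ht =>
    mul_nonneg (Real.rpow_nonneg (le_trans hx (le_of_lt ht)) _) (Real.exp_pos _).le

lemma incG_le_incG_zero {a : ℝ} (ha : 0 < a) {x : ℝ} (hx : 0 ≤ x) :
    incG a x ≤ incG a 0 := by
  apply setIntegral_mono_set (intOn_g1 ha)
  · filter_upwards [ae_restrict_mem measurableSet_Ioi] with t ht
    exact mul_nonneg (Real.rpow_nonneg (le_of_lt ht) _) (Real.exp_pos _).le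
  · exact HasSubset.Subset.eventuallyLE (Ioi_subset_Ioi hx)

lemma incG_le {a : ℝ} (ha : 0 < a) {x : ℝ} (hx : 0 ≤ x) :
    incG a x ≤ Real.exp (-(1/2) * x) *
      ∫ t in Ioi (0:ℝ), t ^ (a - 1) * Real.exp (-(1/2) * t) := by
  have h1 : incG a x ≤ ∫ t in Ioi x, (t ^ (a - 1) * Real.exp (-(1/2) * t)) *
      Real.exp (-(1/2) * x) := by
    apply setIntegral_mono_on (intOn_g1' ha hx)
      (((intOn_g ha one_half_pos).mono_set (Ioi_subset_Ioi hx)).mul_const _)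
      measurableSet_Ioi
    intro t ht
    have htx : x ≤ t := le_of_lt ht
    have heq : t ^ (a - 1) * Real.exp (-t)
        = (t ^ (a - 1) * Real.exp (-(1/2) * t)) * Real.exp (-(1/2) * t) := by
      rw [mul_assoc, ← Real.exp_add]; ring_nf
    rw [heq]
    apply mul_le_mul_of_nonneg_left (Real.exp_le_exp.mpr (by linarith))
    exact mul_nonneg (Real.rpow_nonneg (le_trans hx htx) _) (Real.exp_pos _).le
  rw [integral_mul_const] at h1
  refine h1.trans ?_
  rw [mul_comm]
  apply mul_le_mul_of_nonneg_left _ (Real.exp_pos _).le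
  apply setIntegral_mono_set (intOn_g ha one_half_pos)
  · filter_upwards [ae_restrict_mem measurableSet_Ioi] with t ht
    exact mul_nonneg (Real.rpow_nonneg (le_of_lt ht) _) (Real.exp_pos _).le
  · exact HasSubset.Subset.eventuallyLE (Ioi_subset_Ioi hx)

lemma hasDerivAt_incG {a : ℝ} (ha : 0 < a) {x : ℝ} (hx : 0 < x) :
    HasDerivAt (incG a) (-(x ^ (a - 1) * Real.exp (-x))) x := by
  set g : ℝ → ℝ := fun t => t ^ (a - 1) * Real.exp (-t) with hg
  have hcontOn : ContinuousOn g (Ioi 0) := by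
    apply ContinuousOn.mul
    · exact fun t ht => (Real.continuousAt_rpow_const t (a-1)
        (Or.inl (ne_of_gt ht))).continuousWithinAt
    · exact (Real.continuous_exp.comp continuous_neg).continuousOn
  have hd : HasDerivAt (fun y => (∫ t in Ioi (0:ℝ), g t) - ∫ t in (0:ℝ)..y, g t)
      (-(g x)) x := by
    apply HasDerivAt.const_sub
    apply intervalIntegral.integral_hasDerivAt_right
    · rw [intervalIntegrable_iff_integrableOn_Ioc_of_le hx.le]
      exact (intOn_g1 ha).mono_set Ioc_subset_Ioi_self
    · exact hcontOn.stronglyMeasurableAtFilter isOpen_Ioi x hx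
    · exact (Real.continuousAt_rpow_const x (a-1) (Or.inl hx.ne')).mul
        ((Real.continuous_exp.comp continuous_neg).continuousAt)
  apply hd.congr_of_eventuallyEq
  filter_upwards [isOpen_Ioi.mem_nhds (show x ∈ Ioi 0 from hx)] with y hy
  have hsplit : (∫ t in Ioi (0:ℝ), g t) =
      (∫ t in Ioc (0:ℝ) y, g t) + ∫ t in Ioi y, g t := by
    rw [← setIntegral_union (Ioc_disjoint_Ioi le_rfl) measurableSet_Ioi
      ((intOn_g1 ha).mono_set Ioc_subset_Ioi_self) (intOn_g1' ha (le_of_lt hy)),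
      Ioc_union_Ioi_eq_Ioi (le_of_lt hy)]
  rw [intervalIntegral.integral_of_le (le_of_lt hy), hsplit]
  show incG a y = _
  rw [incG]
  ring

lemma mellin_incG {a s : ℝ} (ha : 0 < a) (hs : 0 < s) :
    ∫ x in Ioi (0:ℝ), x ^ (s - 1) * incG a x = Real.Gamma (a + s) / s := by
  set K : ℝ := ∫ t in Ioi (0:ℝ), t ^ (a - 1) * Real.exp (-(1/2) * t) with hK
  have hK0 : 0 ≤ K := setIntegral_nonneg measurableSet_Ioi fun t ht =>
    mul_nonneg (Real.rpow_nonneg (le_of_lt ht) _) (Real.exp_pos _).le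
  set H : ℝ → ℝ := fun x => x ^ s / s * incG a x with hH
  have hH0 : H 0 = 0 := by simp [hH, Real.zero_rpow hs.ne']
  have hFcont : ContinuousOn (incG a) (Ioi 0) := fun x hx =>
    (hasDerivAt_incG ha hx).continuousAt.continuousWithinAt
  -- derivative
  have hderiv : ∀ x ∈ Ioi (0:ℝ), HasDerivAt H
      (x ^ (s - 1) * incG a x - x ^ (s + a - 1) * Real.exp (-x) / s) x := by
    intro x hx
    have h1 : HasDerivAt (fun y : ℝ => y ^ s / s) (x ^ (s - 1)) x := by
      have := (Real.hasDerivAt_rpow_const (x := x) (p := s) (Or.inl hx.ne')).div_const s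
      simpa [mul_comm, mul_div_assoc, mul_div_cancel_left₀ _ hs.ne'] using this
    have h2 := h1.mul (hasDerivAt_incG ha hx)
    refine h2.congr_deriv ?_
    have hxx : x ^ s * x ^ (a - 1) = x ^ (s + a - 1) := by
      rw [← Real.rpow_add hx]; ring_nf
    rw [← hxx]
    ring
  -- integrability of first term
  have I1 : IntegrableOn (fun x => x ^ (s - 1) * incG a x) (Ioi 0) := by
    apply Integrable.mono' (((intOn_g hs one_half_pos).mul_const K))
    · apply ContinuousOn.aestronglyMeasurable _ measurableSet_Ioi
      have h1 : ContinuousOn (fun x : ℝ => x ^ (s-1)) (Ioi 0) := fun x hx =>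
        (Real.continuousAt_rpow_const x (s-1) (Or.inl (ne_of_gt hx))).continuousWithinAt
      exact h1.mul hFcont
    · filter_upwards [ae_restrict_mem measurableSet_Ioi] with x hx
      have h0 : (0:ℝ) ≤ x ^ (s-1) * incG a x :=
        mul_nonneg (Real.rpow_nonneg (le_of_lt hx) _) (incG_nonneg a (le_of_lt hx))
      rw [Real.norm_eq_abs, abs_of_nonneg h0]
      calc x ^ (s-1) * incG a x ≤ x ^ (s-1) * (Real.exp (-(1/2) * x) * K) := by
            gcongr
            · exact Real.rpow_nonneg (le_of_lt hx) _
            · exact incG_le ha (le_of_lt hx)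
        _ = x ^ (s-1) * Real.exp (-(1/2) * x) * K := by ring
  have I2 : IntegrableOn (fun x => x ^ (s + a - 1) * Real.exp (-x)) (Ioi 0) :=
    intOn_g1 (by linarith)
  -- continuity at 0
  have hcont : ContinuousWithinAt H (Ici 0) 0 := by
    rw [ContinuousWithinAt, hH0]
    apply squeeze_zero'
    · filter_upwards [self_mem_nhdsWithin] with x (hx : x ∈ Ici 0)
      exact mul_nonneg (div_nonneg (Real.rpow_nonneg hx _) hs.le) (incG_nonneg a hx)
    · filter_upwards [self_mem_nhdsWithin] with x (hx : x ∈ Ici 0)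
      show H x ≤ x ^ s * (incG a 0 / s)
      calc H x ≤ x ^ s / s * incG a 0 := by
            apply mul_le_mul_of_nonneg_left (incG_le_incG_zero ha hx)
            exact div_nonneg (Real.rpow_nonneg hx _) hs.le
        _ = x ^ s * (incG a 0 / s) := by ring
    · have hc : ContinuousAt (fun x : ℝ => x ^ s) 0 :=
        Real.continuousAt_rpow_const 0 s (Or.inr hs.le)
      have := (hc.mono_left (nhdsWithin_le_nhds (s := Ici (0:ℝ)))).mul_const (incG a 0 / s)
      simpa [Real.zero_rpow hs.ne'] using this
  -- limit at top
  have htop : Tendsto H atTop (nhds 0) := by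
    apply squeeze_zero'
    · filter_upwards [eventually_ge_atTop (0:ℝ)] with x hx
      exact mul_nonneg (div_nonneg (Real.rpow_nonneg hx _) hs.le) (incG_nonneg a hx)
    · filter_upwards [eventually_ge_atTop (0:ℝ)] with x hx
      show H x ≤ x ^ s * Real.exp (-(1/2) * x) * (K / s)
      calc H x ≤ x ^ s / s * (Real.exp (-(1/2) * x) * K) := by
            apply mul_le_mul_of_nonneg_left (incG_le ha hx)
            exact div_nonneg (Real.rpow_nonneg hx _) hs.le
        _ = x ^ s * Real.exp (-(1/2) * x) * (K / s) := by ring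
    · have := (tendsto_rpow_mul_exp_neg_mul_atTop_nhds_zero s (1/2)
        one_half_pos).mul_const (K / s)
      simpa using this
  have hftc := integral_Ioi_of_hasDerivAt_of_tendsto hcont hderiv
    (I1.sub (I2.div_const s)) htop
  rw [hH0, sub_zero] at hftc
  have hsplit := integral_sub I1 (I2.div_const s)
  rw [hftc] at hsplit
  have hgam : ∫ x in Ioi (0:ℝ), x ^ (s + a - 1) * Real.exp (-x) = Real.Gamma (a + s) := by
    rw [Real.Gamma_eq_integral (by linarith : (0:ℝ) < a + s)]
    apply setIntegral_congr_fun measurableSet_Ioi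
    intro x _
    rw [show a + s - 1 = s + a - 1 by ring]
    ring
  have : ∫ x in Ioi (0:ℝ), x ^ (s + a - 1) * Real.exp (-x) / s = Real.Gamma (a + s) / s := by
    rw [integral_div, hgam]
  linarith [hsplit, this]

/-- The compound pointing-error/α-μ-fading PDF
`f(x) = (φ μ^{φ/α} x^{φ-1} / (S₀^φ ĥ_f^φ Γ(μ))) Γ((αμ-φ)/α, μ x^α/(S₀^α ĥ_f^α))`
on `x > 0` integrates to one, where `Γ(a, y) = ∫_y^∞ t^{a-1} e^{-t} dt`. -/
theorem alpha_mu_pointing_error_pdf_integral_eq_one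
    (α μ φ S₀ hf : ℝ)
    (hα : 0 < α) (hμ : 0 < μ) (hφ : 0 < φ) (hS₀ : 0 < S₀) (hhf : 0 < hf)
    (hmaf : φ < μ * α) :
    ∫ x in Ioi (0 : ℝ),
        (φ * μ ^ (φ / α) * x ^ (φ - 1) / (S₀ ^ φ * hf ^ φ * Real.Gamma μ)) *
          (∫ t in Ioi (μ * x ^ α / (S₀ ^ α * hf ^ α)),
              t ^ ((α * μ - φ) / α - 1) * Real.exp (-t))
      = 1 := by
  have hc : (0:ℝ) < S₀ ^ α * hf ^ α := by positivity
  set a : ℝ := (α * μ - φ) / α with ha_def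
  set s : ℝ := φ / α with hs_def
  have ha : 0 < a := div_pos (by nlinarith) hα
  have hs : 0 < s := div_pos hφ hα
  set b : ℝ := μ / (S₀ ^ α * hf ^ α) with hb_def
  have hb : 0 < b := div_pos hμ hc
  have hGμ : 0 < Real.Gamma μ := Real.Gamma_pos_of_pos hμ
  set C : ℝ := φ * μ ^ s / (S₀ ^ φ * hf ^ φ * Real.Gamma μ) with hC_def
  have h1 : ∫ x in Ioi (0:ℝ),
      (φ * μ ^ s * x ^ (φ - 1) / (S₀ ^ φ * hf ^ φ * Real.Gamma μ)) *
        (∫ t in Ioi (μ * x ^ α / (S₀ ^ α * hf ^ α)), t ^ (a - 1) * Real.exp (-t))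
      = ∫ x in Ioi (0:ℝ), C * (x ^ (φ - 1) * incG a (b * x ^ α)) := by
    apply setIntegral_congr_fun measurableSet_Ioi
    intro x _
    have hbx : μ * x ^ α / (S₀ ^ α * hf ^ α) = b * x ^ α := by
      rw [hb_def]; ring
    dsimp only
    rw [hbx]
    show _ = C * (x ^ (φ - 1) * incG a (b * x ^ α))
    rw [incG, hC_def]
    ring
  rw [h1, MeasureTheory.integral_const_mul]
  have h2 : ∫ x in Ioi (0:ℝ), x ^ (φ - 1) * incG a (b * x ^ α)
      = ∫ y in Ioi (0:ℝ), α⁻¹ * (y ^ (s - 1) * incG a (b * y)) := by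
    rw [← integral_comp_rpow_Ioi_of_pos (p := α)
      (g := fun y => α⁻¹ * (y ^ (s - 1) * incG a (b * y))) hα]
    apply setIntegral_congr_fun measurableSet_Ioi
    intro x hx
    have hx0 : (0:ℝ) < x := hx
    have hpow : (x ^ α) ^ (s - 1) = x ^ (φ - α) := by
      rw [← Real.rpow_mul hx0.le]
      congr 1
      rw [hs_def, mul_sub, mul_div_cancel₀ φ hα.ne', mul_one]
    show x ^ (φ - 1) * incG a (b * x ^ α) = (α * x ^ (α - 1)) • _
    rw [smul_eq_mul, hpow]
    have hxx : x ^ (α - 1) * x ^ (φ - α) = x ^ (φ - 1) := by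
      rw [← Real.rpow_add hx0]; ring_nf
    calc x ^ (φ - 1) * incG a (b * x ^ α)
        = (x ^ (α - 1) * x ^ (φ - α)) * incG a (b * x ^ α) * (α * α⁻¹) := by
          rw [hxx, mul_inv_cancel₀ hα.ne', mul_one]
      _ = α * x ^ (α - 1) * (α⁻¹ * (x ^ (φ - α) * incG a (b * x ^ α))) := by ring
  have h3 : ∫ y in Ioi (0:ℝ), y ^ (s - 1) * incG a (b * y)
      = b⁻¹ * ∫ u in Ioi (0:ℝ), (b⁻¹ * u) ^ (s - 1) * incG a u := by
    have hcm := integral_comp_mul_left_Ioi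
      (g := fun u => (b⁻¹ * u) ^ (s - 1) * incG a u) 0 hb
    simp only [mul_zero, smul_eq_mul] at hcm
    rw [← hcm]
    apply setIntegral_congr_fun measurableSet_Ioi
    intro y _
    dsimp only
    rw [inv_mul_cancel_left₀ hb.ne']
  have h4 : ∫ u in Ioi (0:ℝ), (b⁻¹ * u) ^ (s - 1) * incG a u
      = b⁻¹ ^ (s - 1) * ∫ u in Ioi (0:ℝ), u ^ (s - 1) * incG a u := by
    rw [← MeasureTheory.integral_const_mul]
    apply setIntegral_congr_fun measurableSet_Ioi
    intro u hu
    dsimp only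
    rw [Real.mul_rpow (inv_nonneg.mpr hb.le) (le_of_lt hu)]
    ring
  have has : a + s = μ := by
    rw [ha_def, hs_def]
    field_simp
    ring
  have hmel := mellin_incG ha hs
  rw [has] at hmel
  -- combine
  rw [h2, MeasureTheory.integral_const_mul, h3, h4, hmel]
  have hbinv : b⁻¹ = (S₀ ^ α * hf ^ α) / μ := by rw [hb_def, inv_div]
  have hbpow : b⁻¹ * b⁻¹ ^ (s - 1) = (S₀ ^ φ * hf ^ φ) / μ ^ s := by
    have e1 : b⁻¹ * b⁻¹ ^ (s - 1) = b⁻¹ ^ s := by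
      have e2 := Real.rpow_add (inv_pos.mpr hb) 1 (s - 1)
      rw [Real.rpow_one] at e2
      rw [← e2]
      congr 1
      ring
    rw [e1, hbinv, Real.div_rpow hc.le hμ.le,
      Real.mul_rpow (by positivity) (by positivity),
      ← Real.rpow_mul hS₀.le, ← Real.rpow_mul hhf.le,
      show α * s = φ by rw [hs_def]; field_simp]
  rw [show b⁻¹ * (b⁻¹ ^ (s - 1) * (Real.Gamma μ / s))
        = (b⁻¹ * b⁻¹ ^ (s - 1)) * (Real.Gamma μ / s) by ring,
    hbpow, hC_def, hs_def]
  have hμs : (0:ℝ) < μ ^ s := Real.rpow_pos_of_pos hμ s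
  have hP : (0:ℝ) < S₀ ^ φ * hf ^ φ := by positivity
  field_simp
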